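/- Let T = { t : ℕ → Bool | t 0 = false }. There is no d ∈ ℕ and no function f : (ℕ → Bool) → (ℕ → Bool) such that both: (i) f has delay d on T, i.e., for all t, t′ ∈ T and all n ∈ ℕ, if t k = t′ k for all k < n + d then (f t) k = (f t′) k for all k < n; and (ii) for every t ∈ T, f t ∈ T and ( (∃ n, t n = true) ↔ (f t) 1 = true ). -/
import Mathlib


/-- With `T = { t : ℕ → Bool | t 0 = false }`, there is no `d : ℕ` and no
`f : (ℕ → Bool) → (ℕ → Bool)` such that (i) `f` has delay `d` on `T` (inputs agreeing on
their first `n + d` letters yield outputs agreeing on their first `n` letters) and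
(ii) for every `t ∈ T`, `f t ∈ T` and `(∃ n, t n = true) ↔ (f t) 1 = true`. -/
theorem no_bounded_delay_skolem :
    ¬ ∃ (d : ℕ) (f : (ℕ → Bool) → (ℕ → Bool)),
      (∀ t ∈ {t : ℕ → Bool | t 0 = false}, ∀ t' ∈ {t : ℕ → Bool | t 0 = false},
        ∀ n : ℕ, (∀ k < n + d, t k = t' k) → ∀ k < n, f t k = f t' k) ∧
      (∀ t ∈ {t : ℕ → Bool | t 0 = false},
        f t ∈ {t : ℕ → Bool | t 0 = false} ∧ ((∃ n, t n = true) ↔ (f t) 1 = true)) := by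
  rintro ⟨d, f, hdelay, hspec⟩
  set t0 : ℕ → Bool := fun _ => false with ht0
  set t1 : ℕ → Bool := fun k => decide (k = 2 + d) with ht1
  have ht0T : t0 ∈ {t : ℕ → Bool | t 0 = false} := rfl
  have ht1T : t1 ∈ {t : ℕ → Bool | t 0 = false} := by
    simp [ht1]; omega
  have hagree : ∀ k < 2 + d, t0 k = t1 k := by
    intro k hk
    simp [ht0, ht1]; omega
  have h1 : f t0 1 = f t1 1 := hdelay t0 ht0T t1 ht1T 2 hagree 1 one_lt_two
  have h0 : f t0 1 = false := by
    have := (hspec t0 ht0T).2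
    simp [ht0] at this
    simpa [ht0] using this
  have h2 : f t1 1 = true := by
    have := (hspec t1 ht1T).2
    exact this.mp ⟨2 + d, by simp [ht1]⟩
  rw [h0, h2] at h1
  exact Bool.false_ne_true h1
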